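/- Let g, k : (0,∞) → (0,∞) be differentiable with g'(p) ≥ 0 and k'(x) ≥ 0 for all p, x > 0, and let h(x,p) = g(p)/(g(p)+k(x)). Then for all x, p > 0, the mixed second partial derivative ∂²/∂x∂p of log h(x,p) and the mixed second partial derivative ∂²/∂x∂p of log(1 − h(x,p)) both equal g'(p)·k'(x)/(g(p)+k(x))², and in particular both are nonnegative. -/

import Mathlib

/-- Lemma B.2: for h(x,p) = g(p)/(g(p)+k(x)), the mixed second partial derivatives
∂²/∂x∂p of log h and of log(1−h) both equal g'(p)·k'(x)/(g(p)+k(x))², and in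
particular both are nonnegative. -/
theorem mixed_partials_nonneg
    (g k : ℝ → ℝ)
    (hg_pos : ∀ p > (0:ℝ), 0 < g p) (hk_pos : ∀ x > (0:ℝ), 0 < k x)
    (hg_diff : ∀ p > (0:ℝ), DifferentiableAt ℝ g p)
    (hk_diff : ∀ x > (0:ℝ), DifferentiableAt ℝ k x)
    (hg' : ∀ p > (0:ℝ), 0 ≤ deriv g p) (hk' : ∀ x > (0:ℝ), 0 ≤ deriv k x) :
    ∀ x > (0:ℝ), ∀ p > (0:ℝ),
      (deriv (fun x' => deriv (fun p' => Real.log (g p' / (g p' + k x'))) p) x =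
        deriv g p * deriv k x / (g p + k x) ^ 2) ∧
      (deriv (fun x' =>
          deriv (fun p' => Real.log (1 - g p' / (g p' + k x'))) p) x =
        deriv g p * deriv k x / (g p + k x) ^ 2) ∧
      0 ≤ deriv g p * deriv k x / (g p + k x) ^ 2 := by
  intro x hx p hp
  -- inner derivative formulas, valid for every x' > 0
  have inner1 : ∀ x' > (0:ℝ), deriv (fun p' => Real.log (g p' / (g p' + k x'))) p
      = deriv g p / g p - deriv g p / (g p + k x') := by
    intro x' hx'
    have hev : (fun p' => Real.log (g p' / (g p' + k x')))
        =ᶠ[nhds p] fun p' => Real.log (g p') - Real.log (g p' + k x') := by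
      filter_upwards [eventually_gt_nhds hp] with q hq
      exact Real.log_div (hg_pos q hq).ne' (add_pos (hg_pos q hq) (hk_pos x' hx')).ne'
    rw [hev.deriv_eq]
    have h1 : HasDerivAt (fun p' => Real.log (g p')) (deriv g p / g p) p :=
      (hg_diff p hp).hasDerivAt.log (hg_pos p hp).ne'
    have h2 : HasDerivAt (fun p' => Real.log (g p' + k x'))
        (deriv g p / (g p + k x')) p :=
      ((hg_diff p hp).hasDerivAt.add_const (k x')).log
        (add_pos (hg_pos p hp) (hk_pos x' hx')).ne'
    exact (h1.sub h2).deriv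
  have inner2 : ∀ x' > (0:ℝ), deriv (fun p' => Real.log (1 - g p' / (g p' + k x'))) p
      = - (deriv g p / (g p + k x')) := by
    intro x' hx'
    have hev : (fun p' => Real.log (1 - g p' / (g p' + k x')))
        =ᶠ[nhds p] fun p' => Real.log (k x') - Real.log (g p' + k x') := by
      filter_upwards [eventually_gt_nhds hp] with q hq
      have hs : (0:ℝ) < g q + k x' := add_pos (hg_pos q hq) (hk_pos x' hx')
      have : 1 - g q / (g q + k x') = k x' / (g q + k x') := by
        field_simp
        ring
      rw [this, Real.log_div (hk_pos x' hx').ne' hs.ne']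
    rw [hev.deriv_eq]
    have h2 : HasDerivAt (fun p' => Real.log (g p' + k x'))
        (deriv g p / (g p + k x')) p :=
      ((hg_diff p hp).hasDerivAt.add_const (k x')).log
        (add_pos (hg_pos p hp) (hk_pos x' hx')).ne'
    have := (h2.const_sub (Real.log (k x'))).deriv
    simpa using this
  -- derivative in x' of the common term  deriv g p / (g p + k x')
  have houter : HasDerivAt (fun x' => deriv g p / (g p + k x'))
      (-(deriv g p * deriv k x) / (g p + k x) ^ 2) x := by
    have hf : HasDerivAt (fun x' => g p + k x') (deriv k x) x :=
      (hk_diff x hx).hasDerivAt.const_add (g p)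
    have hne : g p + k x ≠ 0 := (add_pos (hg_pos p hp) (hk_pos x hx)).ne'
    have : HasDerivAt (fun x' => deriv g p / (g p + k x'))
        ((0 * (g p + k x) - deriv g p * deriv k x) / (g p + k x) ^ 2) x :=
      (hasDerivAt_const x (deriv g p)).div hf hne
    convert this using 1
    ring
  have hnn : 0 ≤ deriv g p * deriv k x / (g p + k x) ^ 2 :=
    div_nonneg (mul_nonneg (hg' p hp) (hk' x hx)) (sq_nonneg _)
  refine ⟨?_, ?_, hnn⟩
  · have hev : (fun x' => deriv (fun p' => Real.log (g p' / (g p' + k x'))) p)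
        =ᶠ[nhds x] fun x' => deriv g p / g p - deriv g p / (g p + k x') := by
      filter_upwards [eventually_gt_nhds hx] with y hy
      exact inner1 y hy
    rw [hev.deriv_eq]
    have := ((houter.const_sub (deriv g p / g p))).deriv
    rw [this]
    ring
  · have hev : (fun x' => deriv (fun p' => Real.log (1 - g p' / (g p' + k x'))) p)
        =ᶠ[nhds x] fun x' => -(deriv g p / (g p + k x')) := by
      filter_upwards [eventually_gt_nhds hx] with y hy
      exact inner2 y hy
    rw [hev.deriv_eq]
    have : deriv (fun x' => -(deriv g p / (g p + k x'))) x = _ := houter.neg.deriv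
    rw [this]
    ring
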